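/- Every pencil 𝒢[M,N] in 𝒢 contains at least three elements (in fact it has |K| + 1 elements). -/

import Mathlib

/-- The Grassmannian `𝒢` of all subspaces `X ≤ V` with `X ≅ V/X`. -/
def Grass (K V : Type*) [DivisionRing K] [AddCommGroup V] [Module K V] :
    Set (Submodule K V) :=
  {X | Nonempty (X ≃ₗ[K] (V ⧸ X))}

variable {K V : Type*} [DivisionRing K] [AddCommGroup V] [Module K V]

/-- The dimension of the quotient `E / M` (computed as the rank of `E ⧸ (M ∩ E)`). -/
noncomputable def quotRank (M E : Submodule K V) : Cardinal :=
  Module.rank K (E ⧸ (M.comap E.subtype))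

/-- Two subspaces are adjacent if `dim (X/(X ⊓ Y)) = dim (Y/(X ⊓ Y)) = 1`. -/
def Adjacent (X Y : Submodule K V) : Prop :=
  quotRank (X ⊓ Y) X = 1 ∧ quotRank (X ⊓ Y) Y = 1

/-- Two subspaces are distant if they are complementary: `X ⊕ Y = V`. -/
def Distant (X Y : Submodule K V) : Prop := IsCompl X Y

/-- The star `𝒢[M⟩` with centre `M`. -/
def starSet (M : Submodule K V) : Set (Submodule K V) :=
  {E | M ≤ E ∧ quotRank M E = 1}

/-- `M` is the centre of a star, i.e. there is `X ∈ 𝒢` with `M ≤ X`, `dim (X/M) = 1`. -/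
def IsStarCentre (M : Submodule K V) : Prop :=
  ∃ X ∈ Grass K V, M ≤ X ∧ quotRank M X = 1

/-- The top `𝒢⟨N]` with carrier `N`. -/
def topSet (N : Submodule K V) : Set (Submodule K V) :=
  {E | E ≤ N ∧ quotRank E N = 1}

/-- `N` is the carrier of a top, i.e. there is `X ∈ 𝒢` with `X ≤ N`, `dim (N/X) = 1`. -/
def IsTopCarrier (N : Submodule K V) : Prop :=
  ∃ X ∈ Grass K V, X ≤ N ∧ quotRank X N = 1

/-- An adjacency clique: a set of mutually adjacent elements of `𝒢`. -/
def IsAdjClique (A : Set (Submodule K V)) : Prop :=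
  A ⊆ Grass K V ∧ A.Pairwise Adjacent

/-- A maximal adjacency clique. -/
def IsMaxAdjClique (A : Set (Submodule K V)) : Prop :=
  IsAdjClique A ∧ ∀ B, IsAdjClique B → A ⊆ B → A = B

/-- The pencil `𝒢[M,N] = {X ∈ 𝒢 | M < X < N}`. -/
def pencilSet (M N : Submodule K V) : Set (Submodule K V) :=
  {X ∈ Grass K V | M < X ∧ X < N}

/-- `(M, N)` defines a pencil: there is `X ∈ 𝒢` with `M ≤ X ≤ N` and
`dim (X/M) = dim (N/X) = 1`. -/
def IsPencilPair (M N : Submodule K V) : Prop :=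
  ∃ X ∈ Grass K V, M ≤ X ∧ X ≤ N ∧ quotRank M X = 1 ∧ quotRank X N = 1

/-- A pencil in `𝒢`. -/
def IsPencil (S : Set (Submodule K V)) : Prop :=
  ∃ M N : Submodule K V, IsPencilPair M N ∧ S = pencilSet M N

/-- A point is a one-dimensional subspace. -/
def IsPoint (p : Submodule K V) : Prop := Module.rank K p = 1

/-- A line is a two-dimensional subspace. -/
def IsLine (L : Submodule K V) : Prop := Module.rank K L = 2

/-- Two subspaces meet if they have a common point, i.e. nonzero intersection. -/
def Meets (X Y : Submodule K V) : Prop := X ⊓ Y ≠ ⊥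

/-- A distant clique: a set of mutually distant elements of `𝒢`. -/
def IsDistantClique (R : Set (Submodule K V)) : Prop :=
  R ⊆ Grass K V ∧ R.Pairwise Distant

/-- A set has at least three elements. -/
def HasThree (R : Set (Submodule K V)) : Prop :=
  ∃ A ∈ R, ∃ B ∈ R, ∃ C ∈ R, A ≠ B ∧ A ≠ C ∧ B ≠ C

/-- Condition (R2): if a line meets three mutually distinct elements of `R`
then it meets all elements of `R`. -/
def MeetsThreeMeetsAll (R : Set (Submodule K V)) : Prop :=
  ∀ L : Submodule K V, IsLine L →
    ∀ E₀ ∈ R, ∀ E₁ ∈ R, ∀ E₂ ∈ R, E₀ ≠ E₁ → E₀ ≠ E₂ → E₁ ≠ E₂ →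
      Meets L E₀ → Meets L E₁ → Meets L E₂ → ∀ E ∈ R, Meets L E

/-- A partial `Z`-regulus: conditions (R1) and (R2). -/
def IsPartialZRegulus (R : Set (Submodule K V)) : Prop :=
  (IsDistantClique R ∧ HasThree R) ∧ MeetsThreeMeetsAll R

/-- A `Z`-regulus: a partial `Z`-regulus that is maximal, i.e. not properly
contained in any partial `Z`-regulus. -/
def IsZRegulus (R : Set (Submodule K V)) : Prop :=
  IsPartialZRegulus R ∧ ∀ S : Set (Submodule K V), IsPartialZRegulus S → R ⊆ S → R = S

/-- A directrix of `R`: a line meeting all elements of `R`. -/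
def IsDirectrix (R : Set (Submodule K V)) (L : Submodule K V) : Prop :=
  IsLine L ∧ ∀ E ∈ R, Meets L E

/-- Condition (⊠2) from Theorem `Zreg`. -/
def BoxTwo (R : Set (Submodule K V)) : Prop :=
  ∀ E₀ ∈ R, ∀ E₁ ∈ R, ∀ E₂ ∈ R, E₀ ≠ E₁ → E₀ ≠ E₂ → E₁ ≠ E₂ →
    ∀ W ∈ Grass K V, Adjacent W E₀ → ¬ Distant W E₁ → ¬ Distant W E₂ →
      ∀ E ∈ R, ¬ Distant W E


namespace PencilCardAux

open Submodule Cardinal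

universe u v

variable {K : Type u} {V : Type v} [DivisionRing K] [AddCommGroup V] [Module K V]

theorem quotRank_eq_rank_map (A B : Submodule K V) :
    quotRank A B = Module.rank K (B.map A.mkQ) := by
  have e := (A.mkQ.comp B.subtype).quotKerEquivRange
  rw [LinearMap.ker_comp, Submodule.ker_mkQ, LinearMap.range_comp,
    Submodule.range_subtype] at e
  exact e.rank_eq

theorem quotRank_map_mkQ {M A : Submodule K V} (B : Submodule K V) (hMA : M ≤ A) :
    quotRank (A.map M.mkQ) (B.map M.mkQ) = quotRank A B := by
  set A' := A.map M.mkQ with hA'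
  set B' := B.map M.mkQ with hB'
  set s : Submodule K B' := A'.comap B'.subtype with hs
  let f0 : ↥B →ₗ[K] ↥B' := (M.mkQ.comp B.subtype).codRestrict B'
    (fun b => Submodule.mem_map_of_mem b.2)
  let f : ↥B →ₗ[K] (↥B' ⧸ s) := s.mkQ.comp f0
  have hf0surj : Function.Surjective f0 := by
    rintro ⟨w, hw⟩
    obtain ⟨b, hb, rfl⟩ := hw
    exact ⟨⟨b, hb⟩, rfl⟩
  have hfsurj : Function.Surjective f := (s.mkQ_surjective).comp hf0surj
  have hcomap : Submodule.comap M.mkQ A' = A := by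
    rw [hA', Submodule.comap_map_mkQ, sup_eq_right.mpr hMA]
  have hker : LinearMap.ker f = A.comap B.subtype := by
    ext b
    have h1 : f b = s.mkQ (f0 b) := rfl
    rw [LinearMap.mem_ker, Submodule.mem_comap, h1, Submodule.mkQ_apply,
      Submodule.Quotient.mk_eq_zero, hs, Submodule.mem_comap]
    have h2 : (B'.subtype (f0 b) : V ⧸ M) = M.mkQ (b : V) := rfl
    rw [h2, ← hcomap, Submodule.mem_comap]
    exact Iff.rfl
  have e := f.quotKerEquivOfSurjective hfsurj
  rw [hker] at e
  exact e.symm.rank_eq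

theorem subEquiv {M A B : Submodule K V} (hMA : M ≤ A) (hMB : M ≤ B)
    (hA : quotRank M A = 1) (hB : quotRank M B = 1) : Nonempty (↥A ≃ₗ[K] ↥B) := by
  obtain ⟨cA, hcA⟩ := Submodule.exists_isCompl (M.comap A.subtype)
  obtain ⟨cB, hcB⟩ := Submodule.exists_isCompl (M.comap B.subtype)
  have rA : Module.rank K cA = 1 := by
    rw [← (Submodule.quotientEquivOfIsCompl _ _ hcA).rank_eq]; exact hA
  have rB : Module.rank K cB = 1 := by
    rw [← (Submodule.quotientEquivOfIsCompl _ _ hcB).rank_eq]; exact hB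
  obtain ⟨ec⟩ := nonempty_linearEquiv_of_rank_eq (rA.trans rB.symm)
  exact ⟨(Submodule.prodEquivOfIsCompl _ _ hcA).symm.trans
    ((LinearEquiv.prodCongr ((Submodule.comapSubtypeEquivOfLe hMA).trans
      (Submodule.comapSubtypeEquivOfLe hMB).symm) ec).trans
      (Submodule.prodEquivOfIsCompl _ _ hcB))⟩

theorem quotEquiv {N A B : Submodule K V} (hAN : A ≤ N) (hBN : B ≤ N)
    (hA : quotRank A N = 1) (hB : quotRank B N = 1) :
    Nonempty ((V ⧸ A) ≃ₗ[K] (V ⧸ B)) := by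
  obtain ⟨cA, hcA⟩ := Submodule.exists_isCompl (N.map A.mkQ)
  obtain ⟨cB, hcB⟩ := Submodule.exists_isCompl (N.map B.mkQ)
  have rA : Module.rank K (N.map A.mkQ) = 1 := by rw [← quotRank_eq_rank_map]; exact hA
  have rB : Module.rank K (N.map B.mkQ) = 1 := by rw [← quotRank_eq_rank_map]; exact hB
  obtain ⟨en⟩ := nonempty_linearEquiv_of_rank_eq (rA.trans rB.symm)
  let ecA : ↥cA ≃ₗ[K] V ⧸ N :=
    (Submodule.quotientEquivOfIsCompl _ _ hcA).symm.trans
      (Submodule.quotientQuotientEquivQuotient A N hAN)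
  let ecB : ↥cB ≃ₗ[K] V ⧸ N :=
    (Submodule.quotientEquivOfIsCompl _ _ hcB).symm.trans
      (Submodule.quotientQuotientEquivQuotient B N hBN)
  exact ⟨(Submodule.prodEquivOfIsCompl _ _ hcA).symm.trans
    ((LinearEquiv.prodCongr en (ecA.trans ecB.symm)).trans
      (Submodule.prodEquivOfIsCompl _ _ hcB))⟩

theorem two_split {a b : Cardinal.{u}} (h : a + b = 2) (ha : 1 ≤ a) (hb : 1 ≤ b) :
    a = 1 ∧ b = 1 := by
  have h2 : (2 : Cardinal.{u}) < Cardinal.aleph0 := by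
    exact_mod_cast Cardinal.nat_lt_aleph0 2
  obtain ⟨n, rfl⟩ := Cardinal.lt_aleph0.1 ((le_self_add.trans h.le).trans_lt h2)
  obtain ⟨m, rfl⟩ := Cardinal.lt_aleph0.1 ((le_add_self.trans h.le).trans_lt h2)
  have h' : n + m = 2 := by exact_mod_cast h
  have ha' : 1 ≤ n := by exact_mod_cast ha
  have hb' : 1 ≤ m := by exact_mod_cast hb
  have hn : n = 1 := by omega
  have hm : m = 1 := by omega
  subst hn hm
  exact ⟨by norm_num, by norm_num⟩

variable (K) in
/-- The projective line parametrisation of `1`-dimensional subspaces of `K × K`. -/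
def pl : Option K → Submodule K (K × K)
  | none => Submodule.span K {((1 : K), (0 : K))}
  | some a => Submodule.span K {(a, (1 : K))}

theorem mem_span_pair {v q : K × K} :
    q ∈ Submodule.span K {v} ↔ ∃ c : K, c • v = q :=
  Submodule.mem_span_singleton

theorem pl_ne_bot (o : Option K) : pl K o ≠ ⊥ := by
  cases o <;> simp [pl, Submodule.span_singleton_eq_bot, Prod.ext_iff]

theorem pl_ne_top (o : Option K) : pl K o ≠ ⊤ := by
  cases o with
  | none =>
    intro h
    have hm : ((0 : K), (1 : K)) ∈ pl K none := h ▸ Submodule.mem_top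
    obtain ⟨c, hc⟩ := mem_span_pair.1 hm
    simp [Prod.ext_iff] at hc
  | some a =>
    intro h
    have hm : ((1 : K), (0 : K)) ∈ pl K (some a) := h ▸ Submodule.mem_top
    obtain ⟨c, hc⟩ := mem_span_pair.1 hm
    rw [Prod.ext_iff] at hc
    obtain ⟨h1, h2⟩ := hc
    simp only [Prod.smul_fst, Prod.smul_snd, smul_eq_mul, mul_one] at h1 h2
    subst h2
    simp at h1

theorem pl_inj : Function.Injective (pl K) := by
  intro o1 o2 h
  match o1, o2 with
  | none, none => rfl
  | some a, some b =>
    have hm : ((a : K), (1 : K)) ∈ pl K (some b) := h ▸ Submodule.mem_span_singleton_self _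
    obtain ⟨c, hc⟩ := mem_span_pair.1 hm
    rw [Prod.ext_iff] at hc
    obtain ⟨h1, h2⟩ := hc
    simp only [Prod.smul_fst, Prod.smul_snd, smul_eq_mul, mul_one] at h1 h2
    subst h2
    rw [one_mul] at h1
    rw [h1]
  | none, some a =>
    exfalso
    have hm : ((1 : K), (0 : K)) ∈ pl K (some a) := h ▸ Submodule.mem_span_singleton_self _
    obtain ⟨c, hc⟩ := mem_span_pair.1 hm
    rw [Prod.ext_iff] at hc
    obtain ⟨h1, h2⟩ := hc
    simp only [Prod.smul_fst, Prod.smul_snd, smul_eq_mul, mul_one] at h1 h2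
    subst h2
    simp at h1
  | some a, none =>
    exfalso
    have hm : ((a : K), (1 : K)) ∈ pl K none := h ▸ Submodule.mem_span_singleton_self _
    obtain ⟨c, hc⟩ := mem_span_pair.1 hm
    rw [Prod.ext_iff] at hc
    obtain ⟨h1, h2⟩ := hc
    simp at h2

theorem pl_surj (Z : Submodule K (K × K)) (hbZ : Z ≠ ⊥) (htZ : Z ≠ ⊤) :
    ∃ o : Option K, pl K o = Z := by
  by_cases hy : ∃ p ∈ Z, (p : K × K).2 ≠ 0
  · obtain ⟨p, hp, h2⟩ := hy
    refine ⟨some (p.2⁻¹ * p.1), ?_⟩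
    have hv : ((p.2⁻¹ * p.1, (1 : K)) : K × K) ∈ Z := by
      have hsm := Z.smul_mem p.2⁻¹ hp
      have he : p.2⁻¹ • p = ((p.2⁻¹ * p.1, (1 : K)) : K × K) :=
        Prod.ext (by simp) (by simp [inv_mul_cancel₀ h2])
      rwa [he] at hsm
    set a := p.2⁻¹ * p.1 with ha
    show Submodule.span K {((a, (1:K)) : K × K)} = Z
    apply le_antisymm
    · rw [Submodule.span_le, Set.singleton_subset_iff]; exact hv
    · intro q hq
      by_cases hcase : q.1 - q.2 * a = 0
      · have hq' : q = q.2 • ((a, (1 : K)) : K × K) := by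
          refine Prod.ext ?_ ?_
          · simp only [Prod.smul_fst, smul_eq_mul]
            exact (sub_eq_zero.1 hcase)
          · simp
        rw [hq']
        exact Submodule.smul_mem _ _ (Submodule.mem_span_singleton_self _)
      · exfalso
        apply htZ
        have hw : ((q.1 - q.2 * a, (0 : K)) : K × K) ∈ Z := by
          have hsub := Z.sub_mem hq (Z.smul_mem q.2 hv)
          have he : q - q.2 • ((a, (1 : K)) : K × K) = ((q.1 - q.2 * a, (0 : K)) : K × K) :=
            Prod.ext (by simp) (by simp)
          rwa [he] at hsub
        have h10 : (((1 : K), (0 : K)) : K × K) ∈ Z := by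
          have hsm := Z.smul_mem (q.1 - q.2 * a)⁻¹ hw
          have he : (q.1 - q.2 * a)⁻¹ • ((q.1 - q.2 * a, (0 : K)) : K × K)
              = (((1 : K), (0 : K)) : K × K) :=
            Prod.ext (by simp [inv_mul_cancel₀ hcase]) (by simp)
          rwa [he] at hsm
        rw [eq_top_iff]
        rintro ⟨x, y⟩ -
        have hxy : ((x, y) : K × K)
            = (x - y * a) • (((1 : K), (0 : K)) : K × K) + y • ((a, (1 : K)) : K × K) :=
          Prod.ext (by simp) (by simp)
        rw [hxy]
        exact Z.add_mem (Z.smul_mem _ h10) (Z.smul_mem _ hv)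
  · push_neg at hy
    refine ⟨none, ?_⟩
    obtain ⟨p, hp, hp0⟩ := (Submodule.ne_bot_iff Z).1 hbZ
    have h2 : p.2 = 0 := hy p hp
    have h1 : p.1 ≠ 0 := fun h => hp0 (Prod.ext h h2)
    have h10 : (((1 : K), (0 : K)) : K × K) ∈ Z := by
      have hsm := Z.smul_mem p.1⁻¹ hp
      have he : p.1⁻¹ • p = (((1 : K), (0 : K)) : K × K) :=
        Prod.ext (by simp [inv_mul_cancel₀ h1]) (by simp [h2])
      rwa [he] at hsm
    show Submodule.span K {(((1:K), (0:K)) : K × K)} = Z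
    apply le_antisymm
    · rw [Submodule.span_le, Set.singleton_subset_iff]; exact h10
    · intro q hq
      have hq' : q = q.1 • (((1 : K), (0 : K)) : K × K) :=
        Prod.ext (by simp) (by simp [hy q hq])
      rw [hq']
      exact Submodule.smul_mem _ _ (Submodule.mem_span_singleton_self _)

theorem pl_bij : Function.Bijective (fun o : Option K =>
    (⟨pl K o, pl_ne_bot o, pl_ne_top o⟩ :
      {Z : Submodule K (K × K) // Z ≠ ⊥ ∧ Z ≠ ⊤})) := by
  constructor
  · intro o1 o2 h
    exact pl_inj (congrArg Subtype.val h)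
  · rintro ⟨Z, hbZ, htZ⟩
    obtain ⟨o, ho⟩ := pl_surj Z hbZ htZ
    exact ⟨o, Subtype.ext ho⟩

theorem card_lines :
    Cardinal.mk {Z : Submodule K (K × K) // Z ≠ ⊥ ∧ Z ≠ ⊤} = Cardinal.mk K + 1 := by
  have h := Cardinal.mk_congr (Equiv.ofBijective _ (pl_bij (K := K)))
  rw [Cardinal.mk_option] at h
  exact h.symm

end PencilCardAux

universe u v

/-- Every pencil contains at least three elements; in fact it has
exactly `|K| + 1` elements. -/
theorem pencil_card {K : Type u} {V : Type v}
    [DivisionRing K] [AddCommGroup V] [Module K V]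
    (hV : 2 < Module.rank K V)
    (M N : Submodule K V) (hMN : IsPencilPair M N) :
    3 ≤ Cardinal.mk (pencilSet M N) ∧
      Cardinal.lift.{u} (Cardinal.mk (pencilSet M N)) =
        Cardinal.lift.{v} (Cardinal.mk K) + 1 := by
  classical
  obtain ⟨X₀, hX₀G, hMX₀, hX₀N, hr1, hr2⟩ := hMN
  have hMN' : M ≤ N := hMX₀.trans hX₀N
  set N' : Submodule K (V ⧸ M) := N.map M.mkQ with hN'def
  have hX₀'le : X₀.map M.mkQ ≤ N' := Submodule.map_mono hX₀N
  have hquotN : ∀ B : Submodule K V, quotRank M B = Module.rank K (B.map M.mkQ) :=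
    fun B => PencilCardAux.quotRank_eq_rank_map M B
  have hcomapN' : Submodule.comap M.mkQ N' = N := by
    rw [hN'def, Submodule.comap_map_mkQ, sup_eq_right.mpr hMN']
  -- `N'` has rank two
  have hrankN' : Module.rank K N' = 2 := by
    have hadd := rank_quotient_add_rank_of_divisionRing
      ((X₀.map M.mkQ).comap N'.subtype)
    have hs1 : Module.rank K ((X₀.map M.mkQ).comap N'.subtype) = 1 := by
      rw [(Submodule.comapSubtypeEquivOfLe hX₀'le).rank_eq, ← hquotN X₀]; exact hr1
    have hs2 : Module.rank K (↥N' ⧸ (X₀.map M.mkQ).comap N'.subtype) = 1 := by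
      have h := PencilCardAux.quotRank_map_mkQ (M := M) (A := X₀) N hMX₀
      exact h.trans hr2
    rw [hs1, hs2] at hadd
    rw [← hadd]
    exact one_add_one_eq_two
  -- basic structural facts for any `X` with `M < X < N`
  have map_ne_bot : ∀ X : Submodule K V, M < X → X.map M.mkQ ≠ ⊥ := by
    intro X h1 hbot
    have hXM : X ≤ M := by
      intro x hx
      have hm : M.mkQ x ∈ X.map M.mkQ := Submodule.mem_map_of_mem hx
      rw [hbot, Submodule.mem_bot, Submodule.mkQ_apply,
        Submodule.Quotient.mk_eq_zero] at hm
      exact hm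
    exact h1.ne' (le_antisymm hXM h1.le)
  have comap_ne_top : ∀ X : Submodule K V, M < X → X < N →
      (X.map M.mkQ).comap N'.subtype ≠ ⊤ := by
    intro X h1 h2 htop
    have hN'le : N' ≤ X.map M.mkQ := Submodule.comap_subtype_eq_top.1 htop
    have hNX : N ≤ X := by
      have hmono := Submodule.comap_mono (f := M.mkQ) hN'le
      rw [hcomapN', Submodule.comap_map_mkQ, sup_eq_right.mpr h1.le] at hmono
      exact hmono
    exact h2.not_ge hNX
  have comap_ne_bot : ∀ X : Submodule K V, M < X → X < N →
      (X.map M.mkQ).comap N'.subtype ≠ ⊥ := by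
    intro X h1 h2 hbot
    apply map_ne_bot X h1
    have hXle : X.map M.mkQ ≤ N' := Submodule.map_mono h2.le
    have hmm := congrArg (Submodule.map N'.subtype) hbot
    rw [Submodule.map_comap_subtype, Submodule.map_bot, inf_eq_right.mpr hXle] at hmm
    exact hmm
  -- rank facts for any `X` with `M < X < N`
  have rank_facts : ∀ X : Submodule K V, M < X → X < N →
      quotRank M X = 1 ∧ quotRank X N = 1 := by
    intro X h1 h2
    have hXle : X.map M.mkQ ≤ N' := Submodule.map_mono h2.le
    have hadd := rank_quotient_add_rank_of_divisionRing
      ((X.map M.mkQ).comap N'.subtype)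
    rw [hrankN'] at hadd
    have ha : 1 ≤ Module.rank K (↥N' ⧸ (X.map M.mkQ).comap N'.subtype) := by
      have hnt : Nontrivial (↥N' ⧸ (X.map M.mkQ).comap N'.subtype) :=
        Submodule.Quotient.nontrivial_iff.2 (comap_ne_top X h1 h2)
      exact Cardinal.one_le_iff_pos.2 (rank_pos (R := K))
    have hb : 1 ≤ Module.rank K ((X.map M.mkQ).comap N'.subtype) := by
      have hnt : Nontrivial ((X.map M.mkQ).comap N'.subtype) :=
        Submodule.nontrivial_iff_ne_bot.2 (comap_ne_bot X h1 h2)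
      exact Cardinal.one_le_iff_pos.2 ((rank_pos_iff_nontrivial (R := K)).2 hnt)
    obtain ⟨e1, e2⟩ := PencilCardAux.two_split hadd ha hb
    constructor
    · rw [hquotN X, ← (Submodule.comapSubtypeEquivOfLe hXle).rank_eq]
      exact e2
    · have h := PencilCardAux.quotRank_map_mkQ (M := M) (A := X) N h1.le
      rw [← h]
      exact e1
  -- membership in the Grassmannian is automatic
  have grass_mem : ∀ X : Submodule K V, M < X → X < N → X ∈ Grass K V := by
    intro X h1 h2
    obtain ⟨ha, hb⟩ := rank_facts X h1 h2
    obtain ⟨e1⟩ := PencilCardAux.subEquiv h1.le hMX₀ ha hr1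
    obtain ⟨e2⟩ := PencilCardAux.quotEquiv hX₀N h2.le hr2 hb
    obtain ⟨e0⟩ := hX₀G
    exact ⟨e1.trans (e0.trans e2)⟩
  have pen_iff : ∀ X : Submodule K V, X ∈ pencilSet M N ↔ (M < X ∧ X < N) := by
    intro X
    constructor
    · rintro ⟨_, h⟩; exact h
    · rintro ⟨h1, h2⟩; exact ⟨grass_mem X h1 h2, h1, h2⟩
  -- the equivalence with nontrivial proper subspaces of `N'`
  have map_comap_mkQ_self : ∀ Y : Submodule K (V ⧸ M),
      (Y.comap M.mkQ).map M.mkQ = Y := by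
    intro Y
    rw [Submodule.map_comap_eq, Submodule.range_mkQ, top_inf_eq]
  let E1 : ↥(pencilSet M N) ≃ {Z : Submodule K ↥N' // Z ≠ ⊥ ∧ Z ≠ ⊤} :=
    { toFun := fun X => ⟨((X : Submodule K V).map M.mkQ).comap N'.subtype, by
        obtain ⟨h1, h2⟩ := (pen_iff X).1 X.2
        exact ⟨comap_ne_bot X h1 h2, comap_ne_top X h1 h2⟩⟩
      invFun := fun Z => ⟨((Z : Submodule K ↥N').map N'.subtype).comap M.mkQ, by
        obtain ⟨Z, hbZ, htZ⟩ := Z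
        set Y := Z.map N'.subtype with hYdef
        have hYle : Y ≤ N' := Submodule.map_subtype_le N' Z
        have hYne : Y ≠ ⊥ := by
          intro hbot
          apply hbZ
          have h := congrArg (Submodule.comap N'.subtype) hbot
          rw [Submodule.comap_map_eq, Submodule.ker_subtype, sup_bot_eq] at h
          rw [h, Submodule.comap_bot, Submodule.ker_subtype]
        have hYne' : Y ≠ N' := by
          intro htop
          apply htZ
          have h := congrArg (Submodule.comap N'.subtype) htop
          rw [Submodule.comap_map_eq, Submodule.ker_subtype, sup_bot_eq] at h
          rw [h]
          exact Submodule.comap_subtype_self N'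
        have hMle : M ≤ Y.comap M.mkQ := by
          intro x hx
          have h0 : M.mkQ x = 0 := (Submodule.Quotient.mk_eq_zero M).2 hx
          have : M.mkQ x ∈ Y := by rw [h0]; exact Y.zero_mem
          exact this
        have hmapM : M.map M.mkQ = ⊥ := by
          rw [Submodule.eq_bot_iff]
          intro y hy
          obtain ⟨x, hx, rfl⟩ := Submodule.mem_map.1 hy
          exact (Submodule.Quotient.mk_eq_zero M).2 hx
        have h1 : M < Y.comap M.mkQ := by
          refine lt_of_le_of_ne hMle (fun h => hYne ?_)
          rw [← map_comap_mkQ_self Y, ← h, hmapM]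
        have h2 : Y.comap M.mkQ < N := by
          constructor
          · rw [← hcomapN']
            exact Submodule.comap_mono hYle
          · intro hle
            apply hYne'
            have h0 : Y.comap M.mkQ = N := le_antisymm
              (by rw [← hcomapN']; exact Submodule.comap_mono hYle) hle
            have := congrArg (Submodule.map M.mkQ) h0
            rw [map_comap_mkQ_self Y] at this
            rw [this, hN'def]
        exact (pen_iff _).2 ⟨h1, h2⟩⟩
      left_inv := by
        rintro ⟨X, hX⟩
        obtain ⟨h1, h2⟩ := (pen_iff X).1 hX
        apply Subtype.ext
        show ((((X.map M.mkQ).comap N'.subtype).map N'.subtype).comap M.mkQ) = X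
        rw [Submodule.map_comap_subtype, inf_eq_right.mpr (Submodule.map_mono h2.le),
          Submodule.comap_map_mkQ, sup_eq_right.mpr h1.le]
      right_inv := by
        rintro ⟨Z, hbZ, htZ⟩
        apply Subtype.ext
        show ((((Z.map N'.subtype).comap M.mkQ).map M.mkQ).comap N'.subtype) = Z
        rw [map_comap_mkQ_self, Submodule.comap_map_eq, Submodule.ker_subtype,
          sup_bot_eq] }
  -- transport to `K × K`
  have hrankKK : Module.rank K (K × K) = 2 := by
    rw [rank_prod', Module.rank_self]
    exact one_add_one_eq_two
  have hlift : Cardinal.lift.{u} (Module.rank K ↥N')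
      = Cardinal.lift.{v} (Module.rank K (K × K)) := by
    rw [hrankN', hrankKK]
    simp
  obtain ⟨e⟩ := nonempty_linearEquiv_of_lift_rank_eq hlift
  let oi := Submodule.orderIsoMapComap e
  have oi_bot : ∀ Z : Submodule K ↥N', oi Z = ⊥ ↔ Z = ⊥ := fun Z => map_eq_bot_iff oi
  have oi_top : ∀ Z : Submodule K ↥N', oi Z = ⊤ ↔ Z = ⊤ := fun Z => map_eq_top_iff oi
  let E2 : {Z : Submodule K ↥N' // Z ≠ ⊥ ∧ Z ≠ ⊤} ≃
      {Z : Submodule K (K × K) // Z ≠ ⊥ ∧ Z ≠ ⊤} :=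
    oi.toEquiv.subtypeEquiv (fun Z => by
      rw [ne_eq, ne_eq, ne_eq, ne_eq, show oi.toEquiv Z = oi Z from rfl,
        oi_bot Z, oi_top Z])
  -- cardinal computation
  have hcard1 : Cardinal.mk ↥(pencilSet M N)
      = Cardinal.mk {Z : Submodule K ↥N' // Z ≠ ⊥ ∧ Z ≠ ⊤} := Cardinal.mk_congr E1
  have hcard2 : Cardinal.lift.{u} (Cardinal.mk {Z : Submodule K ↥N' // Z ≠ ⊥ ∧ Z ≠ ⊤})
      = Cardinal.lift.{v} (Cardinal.mk {Z : Submodule K (K × K) // Z ≠ ⊥ ∧ Z ≠ ⊤}) :=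
    Cardinal.lift_mk_eq'.2 ⟨E2⟩
  have main : Cardinal.lift.{u} (Cardinal.mk ↥(pencilSet M N))
      = Cardinal.lift.{v} (Cardinal.mk K) + 1 := by
    rw [hcard1, hcard2, PencilCardAux.card_lines]
    simp
  refine ⟨?_, main⟩
  have h2K : (2 : Cardinal.{u}) ≤ Cardinal.mk K := by
    rw [Cardinal.two_le_iff]
    exact ⟨0, 1, zero_ne_one⟩
  have h3 : (3 : Cardinal.{max v u}) ≤ Cardinal.lift.{v} (Cardinal.mk K) + 1 := by
    have h2 : (2 : Cardinal.{max v u}) ≤ Cardinal.lift.{v} (Cardinal.mk K) := by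
      have := Cardinal.lift_le.{v}.2 h2K
      simpa using this
    calc (3 : Cardinal.{max v u}) = 2 + 1 := by norm_num
    _ ≤ Cardinal.lift.{v} (Cardinal.mk K) + 1 := add_le_add_left h2 1
  rw [← main] at h3
  have h3' : Cardinal.lift.{u} (3 : Cardinal.{v})
      ≤ Cardinal.lift.{u} (Cardinal.mk ↥(pencilSet M N)) := by
    simpa using h3
  exact Cardinal.lift_le.1 h3'
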